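/- Majority criterion for Phragmén's methods: (a) in an unordered election, if more than half of all voters cast the same ballot σ with |σ| ≥ ⌈M/2⌉ (i.e., v_σ > V/2), then every possible outcome E of Phragmén's unordered method for M seats satisfies |E ∩ σ| ≥ ⌈M/2⌉; (b) in an ordered election, if more than half of all voters cast the same ballot α with at least ⌈M/2⌉ entries (i.e., v_α > V/2), then every possible outcome of Phragmén's ordered method for M seats contains the first ⌈M/2⌉ candidates of α. -/

import Mathlib

open Finset

/-- The number of ballots containing candidate `i` (as a rational number). -/
def phVotes {C : Type} [Fintype C] [DecidableEq C] (v : Finset C → ℕ) (i : C) : ℚ :=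
  ∑ σ ∈ Finset.univ.filter (fun σ : Finset C => i ∈ σ), (v σ : ℚ)

/-- Phragmén's `t_i = (1 + Σ_{σ∋i} v_σ r_σ)/(Σ_{σ∋i} v_σ)` for the current loads `r`. -/
def phT {C : Type} [Fintype C] [DecidableEq C]
    (v : Finset C → ℕ) (r : Finset C → ℚ) (i : C) : ℚ :=
  (1 + ∑ σ ∈ Finset.univ.filter (fun σ : Finset C => i ∈ σ), (v σ : ℚ) * r σ) / phVotes v i

/-- The ballot loads after electing the candidates in the list `l`
(most recently elected first); initially all loads are `0`, and when `i` is
elected the load of every ballot containing `i` is set to `t_i`. -/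
def phLoads {C : Type} [Fintype C] [DecidableEq C] (v : Finset C → ℕ) :
    List C → Finset C → ℚ
  | [], _ => 0
  | i :: l, σ => if i ∈ σ then phT v (phLoads v l) i else phLoads v l σ

/-- `l` (most recently elected first) is a valid sequence of elections for
Phragmén's unordered method: each newly elected candidate is a not yet elected
candidate with positive vote count minimizing `t_i`. -/
def phValid {C : Type} [Fintype C] [DecidableEq C] (v : Finset C → ℕ) : List C → Prop
  | [] => True
  | i :: l => phValid v l ∧ i ∉ l ∧ 0 < phVotes v i ∧
      ∀ j : C, j ∉ l → 0 < phVotes v j →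
        phT v (phLoads v l) i ≤ phT v (phLoads v l) j

/-- `S` is a possible outcome of Phragmén's unordered method for `M` seats:
its elements can be elected in some order by the rule, ties broken arbitrarily. -/
def PhragmenOutcome {C : Type} [Fintype C] [DecidableEq C]
    (v : Finset C → ℕ) (M : ℕ) (S : Finset C) : Prop :=
  ∃ l : List C, phValid v l ∧ l.length = M ∧ l.toFinset = S

/-- The top candidate of the ballot `α` given the set `E` of already elected
candidates: the first entry of `α` not in `E` (if any). -/
def topOf {C : Type} [DecidableEq C] (E : Finset C) (α : List C) : Option C :=
  α.find? (fun c => decide (c ∉ E))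

/-- The set of voters whose ballot is currently counted for candidate `i`,
given the set `E` of already elected candidates. -/
def poCounted {C : Type} [Fintype C] [DecidableEq C] {n : ℕ}
    (b : Fin n → List C) (E : Finset C) (i : C) : Finset (Fin n) :=
  Finset.univ.filter (fun k => topOf E (b k) = some i)

/-- Phragmén's `t_i = (1 + Σ_{α∈A_i} v_α r_α)/(Σ_{α∈A_i} v_α)` for the current
loads `r` and elected set `E` (each individual ballot has weight 1). -/
def poT {C : Type} [Fintype C] [DecidableEq C] {n : ℕ}
    (b : Fin n → List C) (r : Fin n → ℚ) (E : Finset C) (i : C) : ℚ :=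
  (1 + ∑ k ∈ poCounted b E i, r k) / ((poCounted b E i).card : ℚ)

/-- The ballot loads after electing the candidates in the list `l`
(most recently elected first). -/
def poLoads {C : Type} [Fintype C] [DecidableEq C] {n : ℕ}
    (b : Fin n → List C) : List C → Fin n → ℚ
  | [], _ => 0
  | i :: l, k =>
      if topOf l.toFinset (b k) = some i then poT b (poLoads b l) l.toFinset i
      else poLoads b l k

/-- `l` (most recently elected first) is a valid sequence of elections for
Phragmén's ordered method. -/
def poValid {C : Type} [Fintype C] [DecidableEq C] {n : ℕ}
    (b : Fin n → List C) : List C → Prop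
  | [] => True
  | i :: l => poValid b l ∧ i ∉ l ∧ 0 < (poCounted b l.toFinset i).card ∧
      ∀ j : C, j ∉ l → 0 < (poCounted b l.toFinset j).card →
        poT b (poLoads b l) l.toFinset i ≤ poT b (poLoads b l) l.toFinset j

/-- `S` is a possible outcome of Phragmén's ordered method for `M` seats. -/
def POOutcome {C : Type} [Fintype C] [DecidableEq C] {n : ℕ}
    (b : Fin n → List C) (M : ℕ) (S : Finset C) : Prop :=
  ∃ l : List C, poValid b l ∧ l.length = M ∧ l.toFinset = S

namespace StmtAux

variable {C : Type} [Fintype C] [DecidableEq C]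

/-- The `t`-value of the most recently elected candidate (0 for the empty list). -/
def phTmax (v : Finset C → ℕ) : List C → ℚ
  | [] => 0
  | i :: l => phT v (phLoads v l) i

lemma phVotes_nonneg (v : Finset C → ℕ) (i : C) : 0 ≤ phVotes v i :=
  Finset.sum_nonneg fun τ _ => by positivity

lemma phVotes_mul_phT (v : Finset C → ℕ) (r : Finset C → ℚ) (i : C) (h : 0 < phVotes v i) :
    phVotes v i * phT v r i
      = 1 + ∑ σ ∈ Finset.univ.filter (fun σ : Finset C => i ∈ σ), (v σ : ℚ) * r σ := by
  rw [phT, mul_div_cancel₀ _ (ne_of_gt h)]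

lemma phT_nonneg (v : Finset C → ℕ) (r : Finset C → ℚ) (i : C)
    (hr : ∀ τ, 0 ≤ r τ) : 0 ≤ phT v r i := by
  apply div_nonneg _ (phVotes_nonneg v i)
  have : 0 ≤ ∑ σ ∈ Finset.univ.filter (fun σ : Finset C => i ∈ σ), (v σ : ℚ) * r σ :=
    Finset.sum_nonneg fun τ _ => mul_nonneg (by positivity) (hr τ)
  linarith

lemma ph_inv (v : Finset C → ℕ) : ∀ l : List C, phValid v l →
    (∀ τ, 0 ≤ phLoads v l τ) ∧ (∀ τ, phLoads v l τ ≤ phTmax v l) ∧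
    (∀ j l', l = j :: l' → ∀ τ, phLoads v l' τ ≤ phTmax v l)
  | [], _ => ⟨fun τ => le_refl 0, fun τ => le_refl 0, fun j l' h => by simp at h⟩
  | i :: l, hval => by
    obtain ⟨hvl, hnm, hpos, hmin⟩ := hval
    obtain ⟨IH1, IH2, IH3⟩ := ph_inv v l hvl
    have main : phTmax v l ≤ phT v (phLoads v l) i := by
      match l, hvl with
      | [], _ => exact phT_nonneg v _ i IH1
      | j :: l', hvl =>
        obtain ⟨hvl', hj, hWj, hminj⟩ := hvl
        have hi' : i ∉ l' := fun h => hnm (List.mem_cons_of_mem j h)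
        have h1 : phT v (phLoads v l') j ≤ phT v (phLoads v l') i := hminj i hi' hpos
        show phT v (phLoads v (j :: l')) i ≥ phT v (phLoads v l') j
        have hsum : ∑ σ ∈ Finset.univ.filter (fun σ : Finset C => i ∈ σ),
              (v σ : ℚ) * phLoads v l' σ
            ≤ ∑ σ ∈ Finset.univ.filter (fun σ : Finset C => i ∈ σ),
              (v σ : ℚ) * phLoads v (j :: l') σ := by
          apply Finset.sum_le_sum
          intro τ _
          apply mul_le_mul_of_nonneg_left _ (by positivity)
          show phLoads v l' τ ≤ phLoads v (j :: l') τ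
          by_cases hjτ : j ∈ τ
          · rw [phLoads, if_pos hjτ]
            exact IH3 j l' rfl τ
          · rw [phLoads, if_neg hjτ]
        set tj := phT v (phLoads v l') j with htj
        rw [ge_iff_le, phT, le_div_iff₀ hpos]
        rw [phT, le_div_iff₀ hpos] at h1
        calc tj * phVotes v i
            ≤ 1 + ∑ σ ∈ Finset.univ.filter (fun σ : Finset C => i ∈ σ),
                (v σ : ℚ) * phLoads v l' σ := h1
          _ ≤ _ := by linarith
    have hnn : ∀ τ, 0 ≤ phLoads v (i :: l) τ := by
      intro τ
      rw [phLoads]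
      by_cases hiτ : i ∈ τ
      · rw [if_pos hiτ]; exact phT_nonneg v _ i IH1
      · rw [if_neg hiτ]; exact IH1 τ
    refine ⟨hnn, ?_, ?_⟩
    · intro τ
      rw [phLoads]
      by_cases hiτ : i ∈ τ
      · rw [if_pos hiτ]; exact le_refl _
      · rw [if_neg hiτ]; exact le_trans (IH2 τ) main
    · rintro j l' hjl τ
      obtain ⟨rfl, rfl⟩ : j = i ∧ l' = l := by
        constructor <;> [exact (List.cons.injEq _ _ _ _ ▸ hjl).1.symm;
          exact (List.cons.injEq _ _ _ _ ▸ hjl).2.symm]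
      exact le_trans (IH2 τ) main

lemma ph_total (v : Finset C → ℕ) : ∀ l : List C, phValid v l →
    ∑ τ : Finset C, (v τ : ℚ) * phLoads v l τ = l.length
  | [], _ => by simp [phLoads]
  | i :: l, ⟨hvl, hnm, hpos, hmin⟩ => by
    have IH := ph_total v l hvl
    have hsplit := Finset.sum_filter_add_sum_filter_not Finset.univ
      (fun τ : Finset C => i ∈ τ) (fun τ => (v τ : ℚ) * phLoads v (i :: l) τ)
    have h1 : ∑ τ ∈ Finset.univ.filter (fun τ : Finset C => i ∈ τ),
        (v τ : ℚ) * phLoads v (i :: l) τ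
        = 1 + ∑ τ ∈ Finset.univ.filter (fun τ : Finset C => i ∈ τ),
            (v τ : ℚ) * phLoads v l τ := by
      have e1 : ∑ τ ∈ Finset.univ.filter (fun τ : Finset C => i ∈ τ),
          (v τ : ℚ) * phLoads v (i :: l) τ
          = ∑ τ ∈ Finset.univ.filter (fun τ : Finset C => i ∈ τ),
            (v τ : ℚ) * phT v (phLoads v l) i := by
        apply Finset.sum_congr rfl
        intro τ hτ
        rw [Finset.mem_filter] at hτ
        rw [phLoads, if_pos hτ.2]
      rw [e1, ← Finset.sum_mul, ← phVotes, phVotes_mul_phT v (phLoads v l) i hpos]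
    have h2 : ∑ τ ∈ Finset.univ.filter (fun τ : Finset C => ¬ i ∈ τ),
        (v τ : ℚ) * phLoads v (i :: l) τ
        = ∑ τ ∈ Finset.univ.filter (fun τ : Finset C => ¬ i ∈ τ),
            (v τ : ℚ) * phLoads v l τ := by
      apply Finset.sum_congr rfl
      intro τ hτ
      rw [Finset.mem_filter] at hτ
      rw [phLoads, if_neg hτ.2]
    have hsplit2 := Finset.sum_filter_add_sum_filter_not Finset.univ
      (fun τ : Finset C => i ∈ τ) (fun τ => (v τ : ℚ) * phLoads v l τ)
    rw [← hsplit, h1, h2, List.length_cons]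
    push_cast
    linarith [hsplit2, IH]

lemma ph_sigma (v : Finset C → ℕ) (σ : Finset C) (hσ : 0 < (v σ : ℚ)) :
    ∀ l : List C, phValid v l → (l.toFinset ∩ σ).card < σ.card →
      phTmax v l ≤ (1 + v σ * phLoads v l σ) / v σ ∧
      (v σ : ℚ) * phLoads v l σ ≤ ((l.toFinset ∩ σ).card : ℚ)
  | [], _, _ => by
    constructor
    · show (0:ℚ) ≤ _
      rw [phLoads]
      positivity
    · rw [phLoads]
      simp
  | i :: l, hval, hc => by
    obtain ⟨hvl, hnm, hpos, hmin⟩ := hval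
    have hsub : (l.toFinset ∩ σ).card ≤ ((i :: l).toFinset ∩ σ).card := by
      apply Finset.card_le_card
      apply Finset.inter_subset_inter _ (Finset.Subset.refl σ)
      rw [List.toFinset_cons]
      exact Finset.subset_insert i l.toFinset
    obtain ⟨IH1, IH2⟩ := ph_sigma v σ hσ l hvl (lt_of_le_of_lt hsub hc)
    obtain ⟨hL0, hLT, _⟩ := ph_inv v l hvl
    -- an unelected candidate of σ exists
    obtain ⟨i₀, hi₀σ, hi₀l⟩ : ∃ i₀ ∈ σ, i₀ ∉ l.toFinset := by
      by_contra h
      push_neg at h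
      have : l.toFinset ∩ σ = σ := Finset.inter_eq_right.mpr h
      rw [this] at hsub
      omega
    have hσF : σ ∈ Finset.univ.filter (fun τ : Finset C => i₀ ∈ τ) :=
      Finset.mem_filter.mpr ⟨Finset.mem_univ σ, hi₀σ⟩
    have hW : (v σ : ℚ) ≤ phVotes v i₀ := by
      apply Finset.single_le_sum (f := fun τ : Finset C => (v τ : ℚ)) _ hσF
      intro τ _
      positivity
    have hWpos : 0 < phVotes v i₀ := lt_of_lt_of_le hσ hW
    set q := phLoads v l σ with hq
    set Q := (1 + (v σ : ℚ) * q) / v σ with hQdef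
    have hvQ : (v σ : ℚ) * Q = 1 + v σ * q := by
      rw [hQdef, mul_div_cancel₀ _ (ne_of_gt hσ)]
    -- t_{i₀} ≤ Q
    have hti₀ : phT v (phLoads v l) i₀ ≤ Q := by
      rw [phT, div_le_iff₀ hWpos]
      have hsplit : ∑ τ ∈ Finset.univ.filter (fun τ : Finset C => i₀ ∈ τ),
          (v τ : ℚ) * phLoads v l τ
          = (v σ : ℚ) * q + ∑ τ ∈ (Finset.univ.filter
              (fun τ : Finset C => i₀ ∈ τ)).erase σ, (v τ : ℚ) * phLoads v l τ := by
        rw [← Finset.add_sum_erase _ _ hσF]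
      have hbound : ∑ τ ∈ (Finset.univ.filter (fun τ : Finset C => i₀ ∈ τ)).erase σ,
          (v τ : ℚ) * phLoads v l τ
          ≤ ∑ τ ∈ (Finset.univ.filter (fun τ : Finset C => i₀ ∈ τ)).erase σ,
            (v τ : ℚ) * Q := by
        apply Finset.sum_le_sum
        intro τ _
        exact mul_le_mul_of_nonneg_left (le_trans (hLT τ) IH1) (by positivity)
      have hrest : ∑ τ ∈ (Finset.univ.filter (fun τ : Finset C => i₀ ∈ τ)).erase σ,
          (v τ : ℚ) * Q = (phVotes v i₀ - v σ) * Q := by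
        rw [← Finset.sum_mul]
        congr 1
        have := Finset.add_sum_erase _ (fun τ : Finset C => (v τ : ℚ)) hσF
        rw [phVotes]
        linarith
      have : Q * phVotes v i₀ = (v σ : ℚ) * Q + (phVotes v i₀ - v σ) * Q := by ring
      rw [this, hvQ]
      linarith
    have key : phT v (phLoads v l) i ≤ Q :=
      le_trans (hmin i₀ (fun h => hi₀l (List.mem_toFinset.mpr h)) hWpos) hti₀
    by_cases hiσ : i ∈ σ
    · have hql : phLoads v (i :: l) σ = phT v (phLoads v l) i := by
        rw [phLoads, if_pos hiσ]
      have hcard : ((i :: l).toFinset ∩ σ).card = (l.toFinset ∩ σ).card + 1 := by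
        rw [List.toFinset_cons, Finset.insert_inter_of_mem hiσ,
          Finset.card_insert_of_notMem]
        intro h
        exact hnm (List.mem_toFinset.mp (Finset.mem_inter.mp h).1)
      constructor
      · show phT v (phLoads v l) i ≤ _
        rw [hql, le_div_iff₀ hσ]
        nlinarith [phT_nonneg v (phLoads v l) i hL0]
      · rw [hql, hcard]
        push_cast
        nlinarith [mul_le_mul_of_nonneg_left key (le_of_lt hσ)]
    · have hql : phLoads v (i :: l) σ = q := by
        rw [phLoads, if_neg hiσ]
      have hcard : ((i :: l).toFinset ∩ σ) = (l.toFinset ∩ σ) := by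
        rw [List.toFinset_cons, Finset.insert_inter_of_notMem hiσ]
      rw [hql, hcard]
      exact ⟨key, IH2⟩

lemma partA (v : Finset C → ℕ) (M : ℕ) (σ : Finset C) (hM : 1 ≤ M)
    (hσc : (M + 1) / 2 ≤ σ.card) (hmaj : (∑ τ : Finset C, v τ) < 2 * v σ)
    (E : Finset C) (hE : PhragmenOutcome v M E) : (M + 1) / 2 ≤ (E ∩ σ).card := by
  obtain ⟨l, hval, hlen, rfl⟩ := hE
  by_contra hlt
  push_neg at hlt
  have hvσ : 0 < v σ := by
    have : v σ ≤ ∑ τ : Finset C, v τ :=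
      Finset.single_le_sum (fun τ _ => Nat.zero_le _) (Finset.mem_univ σ)
    omega
  have hσQ : 0 < (v σ : ℚ) := by exact_mod_cast hvσ
  have hcard : (l.toFinset ∩ σ).card < σ.card := lt_of_lt_of_le hlt hσc
  obtain ⟨hT, hq⟩ := ph_sigma v σ hσQ l hval hcard
  obtain ⟨hL0, hLT, _⟩ := ph_inv v l hval
  have htot := ph_total v l hval
  rw [hlen] at htot
  set q := phLoads v l σ with hqdef
  set Q := (1 + (v σ : ℚ) * q) / (v σ : ℚ) with hQdef
  have hvQ : (v σ : ℚ) * Q = 1 + v σ * q := mul_div_cancel₀ _ (ne_of_gt hσQ)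
  have hq0 : 0 ≤ q := hL0 σ
  have hQpos : 0 < Q := by
    apply div_pos _ hσQ
    nlinarith
  have hσu : σ ∈ (Finset.univ : Finset (Finset C)) := Finset.mem_univ σ
  have hsplit : ∑ τ : Finset C, (v τ : ℚ) * phLoads v l τ
      = (v σ : ℚ) * q + ∑ τ ∈ Finset.univ.erase σ, (v τ : ℚ) * phLoads v l τ :=
    (Finset.add_sum_erase _ _ hσu).symm
  have hb : ∑ τ ∈ Finset.univ.erase σ, (v τ : ℚ) * phLoads v l τ
      ≤ ∑ τ ∈ Finset.univ.erase σ, (v τ : ℚ) * Q := by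
    apply Finset.sum_le_sum
    intro τ _
    exact mul_le_mul_of_nonneg_left (le_trans (hLT τ) hT) (by positivity)
  have hVr : ∑ τ ∈ Finset.univ.erase σ, (v τ : ℚ)
      = (∑ τ : Finset C, (v τ : ℚ)) - v σ := by
    have := Finset.add_sum_erase _ (fun τ : Finset C => (v τ : ℚ)) hσu
    linarith
  have h1 : ∑ τ ∈ Finset.univ.erase σ, (v τ : ℚ) * Q
      = ((∑ τ : Finset C, (v τ : ℚ)) - v σ) * Q := by
    rw [← Finset.sum_mul, hVr]
  have hVlt : (∑ τ : Finset C, (v τ : ℚ)) < 2 * (v σ : ℚ) := by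
    have : ((∑ τ : Finset C, v τ : ℕ) : ℚ) < ((2 * v σ : ℕ) : ℚ) := by exact_mod_cast hmaj
    push_cast at this
    linarith
  have h2 : ((∑ τ : Finset C, (v τ : ℚ)) - v σ) * Q < (v σ : ℚ) * Q := by
    apply mul_lt_mul_of_pos_right _ hQpos
    linarith
  have hnat : 2 * (l.toFinset ∩ σ).card + 1 ≤ M := by omega
  have hnatQ : 2 * ((l.toFinset ∩ σ).card : ℚ) + 1 ≤ (M : ℚ) := by exact_mod_cast hnat
  linarith

lemma topOf_cons (E : Finset C) (c : C) (β : List C) :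
    topOf E (c :: β) = if c ∈ E then topOf E β else some c := by
  rw [topOf, List.find?_cons]
  by_cases h : c ∈ E <;> simp [h, topOf]

lemma topOf_not_mem {E : Finset C} {β : List C} {c : C} (h : topOf E β = some c) :
    c ∉ E := by
  have := List.find?_some h
  simpa using this

lemma topOf_insert_of_ne {E : Finset C} {i j : C} :
    ∀ β : List C, topOf E β = some i → i ≠ j → topOf (insert j E) β = some i
  | [], h, _ => by simp [topOf] at h
  | c :: β, h, hij => by
    rw [topOf_cons] at h
    rw [topOf_cons]
    by_cases hc : c ∈ E
    · rw [if_pos hc] at h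
      rw [if_pos (Finset.mem_insert_of_mem hc)]
      exact topOf_insert_of_ne β h hij
    · rw [if_neg hc] at h
      have hci : c = i := Option.some.inj h
      subst hci
      have hni : c ∉ insert j E := by
        rw [Finset.mem_insert]
        rintro (rfl | hcE)
        · exact hij rfl
        · exact hc hcE
      rw [if_neg hni]

lemma topOf_insert_cases {E : Finset C} {i j : C} :
    ∀ β : List C, topOf (insert j E) β = some i →
      topOf E β = some i ∨ topOf E β = some j
  | [], h => by simp [topOf] at h
  | c :: β, h => by
    rw [topOf_cons] at h
    rw [topOf_cons]
    by_cases hc : c ∈ E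
    · rw [if_pos (Finset.mem_insert_of_mem hc)] at h
      rw [if_pos hc]
      exact topOf_insert_cases β h
    · by_cases hcj : c = j
      · subst hcj
        rw [if_neg hc]
        right; rfl
      · rw [if_neg (by rw [Finset.mem_insert]; tauto)] at h
        rw [if_neg hc]
        left; exact h

/-- The number of leading entries of `γ` that are elected. -/
def pcount (γ : List C) (E : Finset C) : ℕ :=
  (γ.takeWhile (fun c => decide (c ∈ E))).length

lemma pcount_cons (c : C) (γ : List C) (E : Finset C) :
    pcount (c :: γ) E = if c ∈ E then pcount γ E + 1 else 0 := by
  by_cases h : c ∈ E <;> simp [pcount, List.takeWhile_cons, h]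

lemma pcount_mono {E E' : Finset C} (h : E ⊆ E') :
    ∀ γ : List C, pcount γ E ≤ pcount γ E'
  | [] => le_refl _
  | c :: γ => by
    rw [pcount_cons, pcount_cons]
    by_cases hc : c ∈ E
    · rw [if_pos hc, if_pos (h hc)]
      exact Nat.succ_le_succ (pcount_mono h γ)
    · rw [if_neg hc]
      exact Nat.zero_le _
lemma pcount_top {E : Finset C} :
    ∀ γ : List C, pcount γ E < γ.length →
      ∃ c, topOf E γ = some c ∧ c ∉ E ∧ pcount γ E + 1 ≤ pcount γ (insert c E)
  | [], h => by simp [pcount] at h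
  | c :: γ, h => by
    rw [topOf_cons]
    by_cases hc : c ∈ E
    · obtain ⟨c', h1, h2, h3⟩ := pcount_top (E := E) γ (by
        rw [pcount_cons, if_pos hc, List.length_cons] at h; omega)
      refine ⟨c', ?_, h2, ?_⟩
      · rw [if_pos hc]; exact h1
      · rw [pcount_cons, if_pos hc, pcount_cons, if_pos (Finset.mem_insert_of_mem hc)]
        omega
    · refine ⟨c, by rw [if_neg hc], hc, ?_⟩
      rw [pcount_cons, if_neg hc, pcount_cons, if_pos (Finset.mem_insert_self c E)]
      omega

lemma pcount_lt_of_take {E : Finset C} :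
    ∀ (γ : List C) (m : ℕ) (c : C), c ∈ γ.take m → c ∉ E → pcount γ E < m
  | [], m, c, hc, _ => by simp at hc
  | c' :: γ, 0, c, hc, _ => by simp at hc
  | c' :: γ, m + 1, c, hc, hcE => by
    rw [List.take_succ_cons, List.mem_cons] at hc
    rw [pcount_cons]
    by_cases h : c' ∈ E
    · rw [if_pos h]
      rcases hc with rfl | hc
      · exact absurd h hcE
      · exact Nat.succ_lt_succ (pcount_lt_of_take γ m c hc hcE)
    · rw [if_neg h]
      omega

variable {n : ℕ}

def poTmax (b : Fin n → List C) : List C → ℚ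
  | [] => 0
  | i :: l => poT b (poLoads b l) l.toFinset i

lemma poT_nonneg (b : Fin n → List C) (r : Fin n → ℚ) (E : Finset C) (i : C)
    (hr : ∀ k, 0 ≤ r k) : 0 ≤ poT b r E i := by
  apply div_nonneg _ (by positivity)
  have : 0 ≤ ∑ k ∈ poCounted b E i, r k := Finset.sum_nonneg fun k _ => hr k
  linarith

lemma poLoads_congr (b : Fin n → List C) :
    ∀ (l : List C) (k k' : Fin n), b k = b k' → poLoads b l k = poLoads b l k'
  | [], _, _, _ => rfl
  | i :: l, k, k', h => by
    rw [poLoads, poLoads, h, poLoads_congr b l k k' h]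

lemma poCounted_subset (b : Fin n → List C) (E : Finset C) {i j : C} (hij : i ≠ j) :
    poCounted b E i ⊆ poCounted b (insert j E) i := by
  intro k hk
  rw [poCounted, Finset.mem_filter] at hk ⊢
  exact ⟨hk.1, topOf_insert_of_ne _ hk.2 hij⟩

lemma poCounted_diff (b : Fin n → List C) (E : Finset C) {i j : C} (k : Fin n)
    (hk : k ∈ poCounted b (insert j E) i \ poCounted b E i) :
    topOf E (b k) = some j := by
  rw [Finset.mem_sdiff, poCounted, poCounted, Finset.mem_filter, Finset.mem_filter] at hk
  rcases topOf_insert_cases _ hk.1.2 with h | h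
  · exact absurd ⟨hk.1.1, h⟩ hk.2
  · exact h

lemma po_card_mul_poT (b : Fin n → List C) (r : Fin n → ℚ) (E : Finset C) (i : C)
    (h : 0 < (poCounted b E i).card) :
    ((poCounted b E i).card : ℚ) * poT b r E i = 1 + ∑ k ∈ poCounted b E i, r k := by
  rw [poT, mul_div_cancel₀]
  exact ne_of_gt (by exact_mod_cast h)

lemma po_inv (b : Fin n → List C) : ∀ l : List C, poValid b l →
    (∀ k, 0 ≤ poLoads b l k) ∧ (∀ k, poLoads b l k ≤ poTmax b l)
  | [], _ => ⟨fun k => le_refl 0, fun k => le_refl 0⟩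
  | i :: l, hval => by
    obtain ⟨hvl, hnm, hpos, hmin⟩ := hval
    obtain ⟨IH1, IH2⟩ := po_inv b l hvl
    have hposQ : 0 < ((poCounted b l.toFinset i).card : ℚ) := by exact_mod_cast hpos
    have main : poTmax b l ≤ poT b (poLoads b l) l.toFinset i := by
      match l, hvl, hnm, hpos, hmin, IH1, IH2, hposQ with
      | [], _, _, _, _, IH1, _, _ => exact poT_nonneg b _ _ i IH1
      | j :: l', hvl, hnm, hpos, hmin, IH1, IH2, hposQ =>
        obtain ⟨hvl', hj, hWj, hminj⟩ := hvl
        have hij : i ≠ j := fun h => hnm (h ▸ List.mem_cons_self (a := i) (l := l'))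
        have hi' : i ∉ l' := fun h => hnm (List.mem_cons_of_mem j h)
        set E := l'.toFinset with hE
        have hEc : (j :: l').toFinset = insert j E := List.toFinset_cons
        set tj := poT b (poLoads b l') E j with htj
        show tj ≤ poT b (poLoads b (j :: l')) (j :: l').toFinset i
        have hsub : poCounted b E i ⊆ poCounted b (insert j E) i :=
          poCounted_subset b E hij
        set W := (poCounted b E i).card with hW
        set d := ((poCounted b (insert j E) i) \ (poCounted b E i)).card with hd
        have hcard : d + W = (poCounted b (insert j E) i).card :=
          Finset.card_sdiff_add_card_eq_card hsub
        have hS1 : ∑ k ∈ poCounted b E i, poLoads b (j :: l') k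
            = ∑ k ∈ poCounted b E i, poLoads b l' k := by
          apply Finset.sum_congr rfl
          intro k hk
          rw [poCounted, Finset.mem_filter] at hk
          have hne : ¬ (topOf E (b k) = some j) := by
            rw [hk.2]
            exact fun h => hij (Option.some.inj h)
          rw [poLoads, if_neg hne]
        have hS2 : ∑ k ∈ (poCounted b (insert j E) i) \ (poCounted b E i),
            poLoads b (j :: l') k = d * tj := by
          have heq : ∀ k ∈ (poCounted b (insert j E) i) \ (poCounted b E i),
              poLoads b (j :: l') k = tj := by
            intro k hk
            rw [poLoads, if_pos (poCounted_diff b E k hk)]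
          rw [Finset.sum_congr rfl heq, Finset.sum_const, nsmul_eq_mul]
        have hsplit : ∑ k ∈ poCounted b (insert j E) i, poLoads b (j :: l') k
            = d * tj + ∑ k ∈ poCounted b E i, poLoads b l' k := by
          rw [← Finset.sum_sdiff hsub, hS1, hS2]
        have h0 : (W : ℚ) * tj ≤ 1 + ∑ k ∈ poCounted b E i, poLoads b l' k := by
          rcases Nat.eq_zero_or_pos W with h | h
          · have hc0 : poCounted b E i = ∅ := Finset.card_eq_zero.mp h
            rw [hc0, Finset.sum_empty, h]
            norm_num
          · have hle := hminj i hi' h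
            have hcpos : (0:ℚ) < ((poCounted b E i).card : ℚ) := by exact_mod_cast h
            have hrw : poT b (poLoads b l') E i
                = (1 + ∑ k ∈ poCounted b E i, poLoads b l' k)
                  / ((poCounted b E i).card : ℚ) := rfl
            rw [hrw, le_div_iff₀ hcpos] at hle
            rw [hW]
            nlinarith [hle]
        have hpos' : 0 < ((poCounted b (insert j E) i).card : ℚ) := by
          rw [hEc] at hposQ
          exact hposQ
        rw [poT, hEc, le_div_iff₀ hpos', hsplit]
        have : ((poCounted b (insert j E) i).card : ℚ) = (d : ℚ) + W := by
          exact_mod_cast hcard.symm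
        rw [this]
        nlinarith [h0]
    refine ⟨?_, ?_⟩
    · intro k
      rw [poLoads]
      by_cases h : topOf l.toFinset (b k) = some i
      · rw [if_pos h]
        exact poT_nonneg b _ _ i IH1
      · rw [if_neg h]
        exact IH1 k
    · intro k
      rw [poLoads]
      by_cases h : topOf l.toFinset (b k) = some i
      · rw [if_pos h]
        exact le_refl _
      · rw [if_neg h]
        exact le_trans (IH2 k) main

lemma po_total (b : Fin n → List C) : ∀ l : List C, poValid b l →
    ∑ k, poLoads b l k = (l.length : ℚ)
  | [], _ => by simp [poLoads]
  | i :: l, ⟨hvl, hnm, hpos, hmin⟩ => by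
    have IH := po_total b l hvl
    have hsplit := Finset.sum_filter_add_sum_filter_not Finset.univ
      (fun k : Fin n => topOf l.toFinset (b k) = some i) (fun k => poLoads b (i :: l) k)
    have hfeq : Finset.univ.filter (fun k : Fin n => topOf l.toFinset (b k) = some i)
        = poCounted b l.toFinset i := rfl
    have h1 : ∑ k ∈ poCounted b l.toFinset i, poLoads b (i :: l) k
        = 1 + ∑ k ∈ poCounted b l.toFinset i, poLoads b l k := by
      rw [← po_card_mul_poT b (poLoads b l) l.toFinset i hpos]
      have heq : ∀ k ∈ poCounted b l.toFinset i,
          poLoads b (i :: l) k = poT b (poLoads b l) l.toFinset i := by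
        intro k hk
        rw [poCounted, Finset.mem_filter] at hk
        rw [poLoads, if_pos hk.2]
      rw [Finset.sum_congr rfl heq, Finset.sum_const, nsmul_eq_mul]
    have h2 : ∑ k ∈ Finset.univ.filter
          (fun k : Fin n => ¬ topOf l.toFinset (b k) = some i), poLoads b (i :: l) k
        = ∑ k ∈ Finset.univ.filter
          (fun k : Fin n => ¬ topOf l.toFinset (b k) = some i), poLoads b l k := by
      apply Finset.sum_congr rfl
      intro k hk
      rw [Finset.mem_filter] at hk
      rw [poLoads, if_neg hk.2]
    have hsplit2 := Finset.sum_filter_add_sum_filter_not Finset.univ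
      (fun k : Fin n => topOf l.toFinset (b k) = some i) (fun k => poLoads b l k)
    rw [← hsplit, hfeq, h1, h2, List.length_cons]
    rw [hfeq] at hsplit2
    push_cast
    linarith [hsplit2, IH]

lemma po_sigma (b : Fin n → List C) (α : List C) (k₀ : Fin n) (hk₀ : b k₀ = α)
    (hw : 0 < (Finset.univ.filter (fun k : Fin n => b k = α)).card) :
    ∀ l : List C, poValid b l → pcount α l.toFinset < α.length →
      poTmax b l ≤ (1 + ((Finset.univ.filter (fun k : Fin n => b k = α)).card : ℚ)
          * poLoads b l k₀) / ((Finset.univ.filter (fun k : Fin n => b k = α)).card : ℚ) ∧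
      ((Finset.univ.filter (fun k : Fin n => b k = α)).card : ℚ) * poLoads b l k₀
        ≤ (pcount α l.toFinset : ℚ)
  | [], _, _ => by
    have hwQ : (0:ℚ) < ((Finset.univ.filter (fun k : Fin n => b k = α)).card : ℚ) := by
      exact_mod_cast hw
    constructor
    · show (0:ℚ) ≤ _
      simp only [poLoads]
      rw [mul_zero, add_zero]
      positivity
    · simp only [poLoads]
      rw [mul_zero]
      positivity
  | i :: l, hval, hpc' => by
    obtain ⟨hvl, hnm, hpos, hmin⟩ := hval
    set A := Finset.univ.filter (fun k : Fin n => b k = α) with hA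
    set w : ℚ := (A.card : ℚ) with hwdef
    have hw0 : (0:ℚ) < w := by rw [hwdef]; exact_mod_cast hw
    have hEc : (i :: l).toFinset = insert i l.toFinset := List.toFinset_cons
    have hmono : pcount α l.toFinset ≤ pcount α (i :: l).toFinset := by
      rw [hEc]
      exact pcount_mono (Finset.subset_insert i l.toFinset) α
    obtain ⟨IH1, IH2⟩ := po_sigma b α k₀ hk₀ hw l hvl (lt_of_le_of_lt hmono hpc')
    obtain ⟨hL0, hLT⟩ := po_inv b l hvl
    set q := poLoads b l k₀ with hq
    set Q := (1 + w * q) / w with hQ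
    have hwQmul : w * Q = 1 + w * q := mul_div_cancel₀ _ (ne_of_gt hw0)
    obtain ⟨c, hc1, hc2, hc3⟩ := pcount_top (E := l.toFinset) α (lt_of_le_of_lt hmono hpc')
    have hcl : c ∉ l := fun h => hc2 (List.mem_toFinset.mpr h)
    have hAsub : A ⊆ poCounted b l.toFinset c := by
      intro k hk
      rw [hA, Finset.mem_filter] at hk
      rw [poCounted, Finset.mem_filter]
      exact ⟨Finset.mem_univ k, by rw [hk.2]; exact hc1⟩
    have hccard : A.card ≤ (poCounted b l.toFinset c).card := Finset.card_le_card hAsub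
    have hcpos : 0 < (poCounted b l.toFinset c).card := lt_of_lt_of_le hw hccard
    have hcposQ : (0:ℚ) < ((poCounted b l.toFinset c).card : ℚ) := by exact_mod_cast hcpos
    have htc : poT b (poLoads b l) l.toFinset c ≤ Q := by
      have hsplitsum : ∑ k ∈ poCounted b l.toFinset c \ A, poLoads b l k
          + ∑ k ∈ A, poLoads b l k = ∑ k ∈ poCounted b l.toFinset c, poLoads b l k :=
        Finset.sum_sdiff hAsub
      have hAq : ∑ k ∈ A, poLoads b l k = w * q := by
        have heq : ∀ k ∈ A, poLoads b l k = q := by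
          intro k hk
          rw [hA, Finset.mem_filter] at hk
          exact poLoads_congr b l k k₀ (by rw [hk.2, hk₀])
        rw [Finset.sum_congr rfl heq, Finset.sum_const, nsmul_eq_mul, hwdef]
      have hrest : ∑ k ∈ poCounted b l.toFinset c \ A, poLoads b l k
          ≤ ((poCounted b l.toFinset c \ A).card : ℚ) * Q := by
        have := Finset.sum_le_card_nsmul (poCounted b l.toFinset c \ A)
          (fun k => poLoads b l k) Q (fun k _ => le_trans (hLT k) IH1)
        rwa [nsmul_eq_mul] at this
      have hcardsplit : ((poCounted b l.toFinset c \ A).card : ℚ)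
          = ((poCounted b l.toFinset c).card : ℚ) - w := by
        have h := Finset.card_sdiff_add_card_eq_card hAsub
        rw [hwdef]
        have : ((poCounted b l.toFinset c \ A).card : ℚ) + (A.card : ℚ)
            = ((poCounted b l.toFinset c).card : ℚ) := by exact_mod_cast h
        linarith
      have hrw : poT b (poLoads b l) l.toFinset c
          = (1 + ∑ k ∈ poCounted b l.toFinset c, poLoads b l k)
            / ((poCounted b l.toFinset c).card : ℚ) := rfl
      rw [hrw, div_le_iff₀ hcposQ]
      nlinarith [hsplitsum, hAq, hrest, hwQmul, hcardsplit]
    have hkey : poT b (poLoads b l) l.toFinset i ≤ Q := le_trans (hmin c hcl hcpos) htc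
    have htop : topOf l.toFinset (b k₀) = some c := by rw [hk₀]; exact hc1
    by_cases hic : c = i
    · have hload : poLoads b (i :: l) k₀ = poT b (poLoads b l) l.toFinset i := by
        rw [poLoads, if_pos (by rw [htop, hic])]
      constructor
      · show poT b (poLoads b l) l.toFinset i ≤ _
        rw [hload, le_div_iff₀ hw0]
        nlinarith [poT_nonneg b (poLoads b l) l.toFinset i hL0, hw0]
      · rw [hload]
        have h1 : w * poT b (poLoads b l) l.toFinset i ≤ w * Q :=
          mul_le_mul_of_nonneg_left hkey (le_of_lt hw0)
        have h2 : (pcount α l.toFinset : ℚ) + 1 ≤ (pcount α ((i :: l).toFinset) : ℚ) := by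
          rw [hEc, ← hic]
          exact_mod_cast hc3
        linarith [IH2, hwQmul, h1, h2]
    · have hload : poLoads b (i :: l) k₀ = q := by
        rw [poLoads, if_neg]
        rw [htop]
        exact fun h => hic (Option.some.inj h)
      constructor
      · show poT b (poLoads b l) l.toFinset i ≤ _
        rw [hload, ← hQ]
        exact hkey
      · rw [hload]
        refine le_trans IH2 ?_
        exact_mod_cast hmono

lemma partB (b : Fin n → List C) (M : ℕ) (α : List C) (hM : 1 ≤ M)
    (hlen : (M + 1) / 2 ≤ α.length)
    (hmaj : n < 2 * (Finset.univ.filter fun k : Fin n => b k = α).card)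
    (E : Finset C) (hE : POOutcome b M E) : (α.take ((M + 1) / 2)).toFinset ⊆ E := by
  obtain ⟨l, hval, hlenl, rfl⟩ := hE
  by_contra hns
  obtain ⟨c, hc1, hc2⟩ : ∃ c ∈ (α.take ((M + 1) / 2)).toFinset, c ∉ l.toFinset := by
    by_contra h
    push_neg at h
    exact hns h
  rw [List.mem_toFinset] at hc1
  have hpcm : pcount α l.toFinset < (M + 1) / 2 := pcount_lt_of_take α _ c hc1 hc2
  set A := Finset.univ.filter (fun k : Fin n => b k = α) with hA
  have hw : 0 < A.card := by omega
  obtain ⟨k₀, hk₀mem⟩ := Finset.card_pos.mp hw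
  have hk₀ : b k₀ = α := (Finset.mem_filter.mp hk₀mem).2
  have hpclt : pcount α l.toFinset < α.length := lt_of_lt_of_le (lt_of_lt_of_le hpcm hlen) (le_refl _)
  obtain ⟨hT, hq⟩ := po_sigma b α k₀ hk₀ hw l hval hpclt
  obtain ⟨hL0, hLT⟩ := po_inv b l hval
  have htot := po_total b l hval
  rw [hlenl] at htot
  set w : ℚ := (A.card : ℚ) with hwdef
  have hw0 : (0:ℚ) < w := by rw [hwdef]; exact_mod_cast hw
  set q := poLoads b l k₀ with hqdef
  set Q := (1 + w * q) / w with hQ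
  have hwQmul : w * Q = 1 + w * q := mul_div_cancel₀ _ (ne_of_gt hw0)
  have hq0 : 0 ≤ q := hL0 k₀
  have hQpos : 0 < Q := by
    apply div_pos _ hw0
    nlinarith
  have hAn : A.card ≤ n := by
    have := Finset.card_le_univ A
    rwa [Fintype.card_fin] at this
  have hsplit : ∑ k ∈ Finset.univ \ A, poLoads b l k + ∑ k ∈ A, poLoads b l k
      = ∑ k, poLoads b l k := Finset.sum_sdiff (Finset.subset_univ A)
  have hAq : ∑ k ∈ A, poLoads b l k = w * q := by
    have heq : ∀ k ∈ A, poLoads b l k = q := by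
      intro k hk
      rw [hA, Finset.mem_filter] at hk
      exact poLoads_congr b l k k₀ (by rw [hk.2, hk₀])
    rw [Finset.sum_congr rfl heq, Finset.sum_const, nsmul_eq_mul, hwdef]
  have hrest : ∑ k ∈ Finset.univ \ A, poLoads b l k
      ≤ ((Finset.univ \ A).card : ℚ) * Q := by
    have := Finset.sum_le_card_nsmul (Finset.univ \ A)
      (fun k => poLoads b l k) Q (fun k _ => le_trans (hLT k) hT)
    rwa [nsmul_eq_mul] at this
  have hcdiff : ((Finset.univ \ A).card : ℚ) = (n : ℚ) - w := by
    rw [Finset.card_sdiff_of_subset (Finset.subset_univ A), Finset.card_univ, Fintype.card_fin, hwdef]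
    exact Nat.cast_sub hAn
  have hnw : (n : ℚ) - w < w := by
    have : (n : ℚ) < 2 * w := by
      rw [hwdef]
      exact_mod_cast hmaj
    linarith
  have h2 : ((n : ℚ) - w) * Q < w * Q := by
    apply mul_lt_mul_of_pos_right hnw hQpos
  have hnat : 2 * pcount α l.toFinset + 1 ≤ M := by omega
  have hnatQ : 2 * (pcount α l.toFinset : ℚ) + 1 ≤ (M : ℚ) := by exact_mod_cast hnat
  rw [← hsplit, hAq] at htot
  nlinarith [hrest, hcdiff, h2, hq, hwQmul, hnatQ, htot]

end StmtAux


/-- Majority criterion for Phragmén's methods.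
(a) Unordered: if more than half of all voters cast the same ballot `σ` with
`|σ| ≥ ⌈M/2⌉`, then every possible outcome `E` of Phragmén's unordered method for
`M` seats satisfies `|E ∩ σ| ≥ ⌈M/2⌉`.
(b) Ordered: if more than half of all voters cast the same ballot `α` with at
least `⌈M/2⌉` entries, then every possible outcome of Phragmén's ordered method
for `M` seats contains the first `⌈M/2⌉` candidates of `α`.
(Here `⌈M/2⌉ = (M+1)/2` with natural division.) -/
theorem stmt_15 :
    (∀ (C : Type) [Fintype C] [DecidableEq C] (v : Finset C → ℕ) (M : ℕ)
        (σ : Finset C), v ∅ = 0 → 1 ≤ M → M ≤ Fintype.card C →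
        (M + 1) / 2 ≤ σ.card →
        (∑ τ : Finset C, v τ) < 2 * v σ →
        ∀ E : Finset C, PhragmenOutcome v M E → (M + 1) / 2 ≤ (E ∩ σ).card)
    ∧ (∀ (C : Type) [Fintype C] [DecidableEq C] (n : ℕ) (b : Fin n → List C)
        (M : ℕ) (α : List C), (∀ k, (b k).Nodup) → (∀ k, b k ≠ []) → α.Nodup →
        1 ≤ M → M ≤ Fintype.card C →
        (M + 1) / 2 ≤ α.length →
        n < 2 * (Finset.univ.filter fun k : Fin n => b k = α).card →
        ∀ E : Finset C, POOutcome b M E → (α.take ((M + 1) / 2)).toFinset ⊆ E) := by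
  constructor
  · intro C _ _ v M σ _ hM _ hσc hmaj E hE
    exact StmtAux.partA v M σ hM hσc hmaj E hE
  · intro C _ _ n b M α _ _ _ hM _ hlen hmaj E hE
    exact StmtAux.partB b M α hM hlen hmaj E hE
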